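/- Let ℓ ≥ 6 be an even integer, and let b, c, d ∈ Sym({1,…,ℓ}) be permutations such that b and c each have cycle type [2^{ℓ/2}] (fixed-point-free involutions), d is a transposition, and the product dcb is an ℓ-cycle. Then the subgroup ⟨b, c, d⟩ of Sym({1,…,ℓ}) is imprimitive: it preserves a nontrivial partition of {1,…,ℓ} into blocks of size 2. -/

import Mathlib

private lemma auxFix {α : Type*} (g : Equiv.Perm α) (x : α) (h : g x = x) :
    ∀ q : ℤ, (g ^ q) x = x := by
  have hn : ∀ n : ℕ, (g ^ n) x = x := by
    intro n
    induction n with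
    | zero => simp
    | succ n ih => rw [pow_succ, Equiv.Perm.mul_apply, h, ih]
  intro q
  cases q with
  | ofNat n => simpa using hn n
  | negSucc n =>
      rw [Int.negSucc_eq, zpow_neg]
      have := hn (n+1)
      apply (g ^ ((n:ℤ)+1)).injective
      rw [← Equiv.Perm.mul_apply, mul_inv_cancel, Equiv.Perm.one_apply]
      rw [show ((n:ℤ)+1) = ((n+1 : ℕ) : ℤ) by push_cast; ring, zpow_natCast]
      exact this.symm

private lemma auxCancel {α : Type*} (f : Equiv.Perm α) {i j : ℕ} (x : α) (hij : i ≤ j)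
    (h : (f ^ i) x = (f ^ j) x) : (f ^ (j - i)) x = x := by
  apply (f ^ i).injective
  rw [← Equiv.Perm.mul_apply, ← pow_add, Nat.add_sub_cancel' hij, ← h]

private lemma auxRed {α : Type*} (f : Equiv.Perm α) {p : ℕ} (hp : 0 < p) (x : α)
    (h : (f ^ p) x = x) (j : ℤ) : ∃ r : ℕ, r < p ∧ (f ^ j) x = (f ^ r) x := by
  have hp' : (p : ℤ) ≠ 0 := by exact_mod_cast hp.ne'
  refine ⟨(j % p).toNat, ?_, ?_⟩
  · have h1 : j % p < p := Int.emod_lt_of_pos j (by exact_mod_cast hp)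
    omega
  · have hA : ((f ^ (p:ℤ)) ^ (j / p)) x = x := by
      apply auxFix
      rw [zpow_natCast]; exact h
    have hsplit : f ^ j = f ^ (j % p) * (f ^ (p:ℤ)) ^ (j / p) := by
      rw [← zpow_mul, ← zpow_add]
      congr 1
      exact (Int.emod_add_mul_ediv j p).symm
    rw [hsplit, Equiv.Perm.mul_apply, hA, ← zpow_natCast f ((j % p).toNat),
      Int.toNat_of_nonneg (Int.emod_nonneg j hp')]

/-- Case I2.N2: if b and c are fixed-point-free involutions, d is a transposition, and the
left-to-right product dcb is an ℓ-cycle, then ⟨b,c,d⟩ preserves a partition into blocks of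
size 2, hence is imprimitive. -/
theorem stmt13 (ℓ : ℕ) (hℓ : 6 ≤ ℓ) (hev : Even ℓ)
    (b c d : Equiv.Perm (Fin ℓ))
    (hb : b.cycleType = Multiset.replicate (ℓ / 2) 2)
    (hc : c.cycleType = Multiset.replicate (ℓ / 2) 2)
    (hd : d.IsSwap)
    (hdcb : (b * c * d).cycleType = {ℓ}) :
    ∃ P : Finset (Finset (Fin ℓ)),
      (∀ p ∈ P, p.card = 2) ∧
      (∀ a : Fin ℓ, ∃! p, p ∈ P ∧ a ∈ p) ∧
      (∀ g ∈ Subgroup.closure ({b, c, d} : Set (Equiv.Perm (Fin ℓ))),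
        ∀ p ∈ P, p.image ⇑g ∈ P) := by
  classical
  set m : ℕ := ℓ / 2 with hm
  have h2m : 2 * m = ℓ := Nat.two_mul_div_two_of_even hev
  have hm3 : 3 ≤ m := by omega
  set σ : Equiv.Perm (Fin ℓ) := b * c * d with hσ
  -- basic facts about σ
  have hσc : σ.IsCycle := by
    rw [← Equiv.Perm.card_cycleType_eq_one, hdcb]; rfl
  have hσsupp : σ.support = Finset.univ := by
    apply Finset.eq_univ_of_card
    have := Equiv.Perm.sum_cycleType σ
    rw [hdcb] at this
    simp at this
    simp [← this]
  have hσf : ∀ x : Fin ℓ, σ x ≠ x := by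
    intro x
    rw [← Equiv.Perm.mem_support, hσsupp]
    exact Finset.mem_univ x
  have hσord : orderOf σ = ℓ := by
    rw [← Equiv.Perm.lcm_cycleType, hdcb]
    simp
  have hσl : σ ^ ℓ = 1 := by
    have h := pow_orderOf_eq_one σ
    rwa [hσord] at h
  have free : ∀ (n : ℕ) (x : Fin ℓ), (σ ^ n) x = x → ℓ ∣ n := by
    intro n x h
    have h1 : σ ^ n = 1 := (hσc.pow_eq_one_iff' (hσf x)).2 h
    rw [← hσord]
    exact orderOf_dvd_of_pow_eq_one h1
  have inj : ∀ (i j : ℕ) (x : Fin ℓ), i ≤ j → (σ ^ i) x = (σ ^ j) x → ℓ ∣ j - i := by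
    intro i j x hij h
    exact free (j - i) x (auxCancel σ x hij h)
  have trans : ∀ x y : Fin ℓ, ∃ n : ℕ, (σ ^ n) x = y := fun x y =>
    hσc.exists_pow_eq (hσf x) (hσf y)
  -- involution facts for b and c
  have invol : ∀ e : Equiv.Perm (Fin ℓ),
      e.cycleType = Multiset.replicate m 2 → e * e = 1 ∧ ∀ x, e x ≠ x := by
    intro e he
    constructor
    · have hdvd : e.cycleType.lcm ∣ 2 := by
        rw [he]
        clear he
        induction m with
        | zero => simp
        | succ k ih =>
            rw [Multiset.replicate_succ, Multiset.lcm_cons]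
            exact lcm_dvd dvd_rfl ih
      rw [Equiv.Perm.lcm_cycleType] at hdvd
      have : e ^ 2 = 1 := orderOf_dvd_iff_pow_eq_one.mp hdvd
      rw [← this]; rw [pow_two]
    · intro x
      rw [← Equiv.Perm.mem_support]
      have hcard : e.support.card = ℓ := by
        have := Equiv.Perm.sum_cycleType e
        rw [he] at this
        rw [Multiset.sum_replicate, smul_eq_mul] at this
        omega
      have : e.support = Finset.univ := by
        apply Finset.eq_univ_of_card
        simpa using hcard
      rw [this]; exact Finset.mem_univ x
  obtain ⟨hb2, hbf⟩ := invol b hb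
  obtain ⟨hc2, hcf⟩ := invol c hc
  have hbinv : b⁻¹ = b := inv_eq_of_mul_eq_one_right hb2
  have hcinv : c⁻¹ = c := inv_eq_of_mul_eq_one_right hc2
  -- ρ and its relations
  set ρ : Equiv.Perm (Fin ℓ) := b * c with hρ
  obtain ⟨u, v, huv, hdsw⟩ := hd
  have hd2 : d * d = 1 := by rw [hdsw]; exact Equiv.swap_mul_self u v
  have hρσd : ρ = σ * d := by
    rw [hσ, hρ, mul_assoc, hd2, mul_one]
  have hdu : d u = v := by rw [hdsw]; exact Equiv.swap_apply_left u v
  have hdv : d v = u := by rw [hdsw]; exact Equiv.swap_apply_right u v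
  have hdx : ∀ x, x ≠ u → x ≠ v → d x = x := by
    intro x h1 h2; rw [hdsw]; exact Equiv.swap_apply_of_ne_of_ne h1 h2
  have hρu : ρ u = σ v := by rw [hρσd, Equiv.Perm.mul_apply, hdu]
  have hρv : ρ v = σ u := by rw [hρσd, Equiv.Perm.mul_apply, hdv]
  have hρx : ∀ x, x ≠ u → x ≠ v → ρ x = σ x := by
    intro x h1 h2; rw [hρσd, Equiv.Perm.mul_apply, hdx x h1 h2]
  -- conjugation by b and c inverts ρ
  have hconj : ∀ e : Equiv.Perm (Fin ℓ), e * e = 1 → e * ρ * e⁻¹ = ρ⁻¹ →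
      ∀ (j : ℤ) (x : Fin ℓ), e ((ρ ^ j) x) = (ρ ^ (-j)) (e x) := by
    intro e he2 hconj j x
    have h1 : e * ρ ^ j * e⁻¹ = ρ ^ (-j) := by
      have := map_zpow (MulAut.conj e) ρ j
      simp only [MulAut.conj_apply] at this
      rw [this, hconj, inv_zpow, zpow_neg]
    calc e ((ρ ^ j) x) = (e * ρ ^ j * e⁻¹) (e x) := by
          simp [Equiv.Perm.mul_apply]
      _ = (ρ ^ (-j)) (e x) := by rw [h1]
  have hbρ : b * ρ * b⁻¹ = ρ⁻¹ := by
    rw [hbinv, hρ, mul_inv_rev, hbinv, hcinv]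
    rw [← mul_assoc, hb2, one_mul]
  have hcρ : c * ρ * c⁻¹ = ρ⁻¹ := by
    rw [hcinv, hρ, mul_inv_rev, hbinv, hcinv]
    rw [← mul_assoc, mul_assoc, hc2, mul_one]
  have conjb : ∀ (j : ℤ) (x : Fin ℓ), b ((ρ ^ j) x) = (ρ ^ (-j)) (b x) :=
    hconj b hb2 hbρ
  have conjc : ∀ (j : ℤ) (x : Fin ℓ), c ((ρ ^ j) x) = (ρ ^ (-j)) (c x) :=
    hconj c hc2 hcρ
  have hcbρ : c = b * ρ := by rw [hρ, ← mul_assoc, hb2, one_mul]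
  -- k0 : distance from u to v along σ
  obtain ⟨n0, hn0⟩ := trans u v
  set k0 : ℕ := n0 % ℓ with hk0def
  have hℓpos : 0 < ℓ := by omega
  have hk0v : (σ ^ k0) u = v := by
    have h := pow_mod_orderOf σ n0
    rw [hσord] at h
    rw [hk0def, h]
    exact hn0
  have hk0lt : k0 < ℓ := Nat.mod_lt n0 hℓpos
  have hk0pos : 0 < k0 := by
    rcases Nat.eq_zero_or_pos k0 with h | h
    · exfalso; rw [h] at hk0v; simp at hk0v; exact huv hk0v
    · exact h
  have zadd : ∀ (i j : ℤ) (x : Fin ℓ), (ρ ^ (i + j)) x = (ρ ^ i) ((ρ ^ j) x) := by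
    intro i j x; rw [zpow_add]; rfl
  -- Claim A: the cycle of v under ρ
  have claimA : ∀ j : ℕ, 1 ≤ j → j ≤ k0 → (ρ ^ j) v = (σ ^ j) u := by
    intro j hj1
    induction j, hj1 using Nat.le_induction with
    | base => intro _; rw [pow_one, pow_one, hρv]
    | succ j hj ih =>
        intro hjk
        have hjk' : j ≤ k0 := by omega
        have hij := ih hjk'
        have hne_u : (σ ^ j) u ≠ u := by
          intro h
          have hdvd := free j u h
          have := Nat.le_of_dvd (by omega) hdvd
          omega
        have hne_v : (σ ^ j) u ≠ v := by
          intro h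
          rw [← hk0v] at h
          have hdvd := inj j k0 u hjk' h
          have h0 : 0 < k0 - j := by omega
          have := Nat.le_of_dvd h0 hdvd
          omega
        rw [pow_succ', pow_succ']
        show ρ ((ρ ^ j) v) = σ ((σ ^ j) u)
        rw [hij, hρx _ hne_u hne_v]
  -- Claim B: the cycle of u under ρ
  have claimB : ∀ j : ℕ, 1 ≤ j → j ≤ ℓ - k0 → (ρ ^ j) u = (σ ^ j) v := by
    intro j hj1
    induction j, hj1 using Nat.le_induction with
    | base => intro _; rw [pow_one, pow_one, hρu]
    | succ j hj ih =>
        intro hjk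
        have hjk' : j ≤ ℓ - k0 := by omega
        have hij := ih hjk'
        have hexp : (σ ^ (j + k0)) u = (σ ^ j) v := by
          rw [pow_add, Equiv.Perm.mul_apply, hk0v]
        have hne_v : (σ ^ j) v ≠ v := by
          intro h
          have hdvd := free j v h
          have := Nat.le_of_dvd (by omega) hdvd
          omega
        have hne_u : (σ ^ j) v ≠ u := by
          intro h
          rw [← hexp] at h
          have hdvd := free (j + k0) u h
          have := Nat.le_of_dvd (by omega) hdvd
          omega
        rw [pow_succ', pow_succ']
        show ρ ((ρ ^ j) u) = σ ((σ ^ j) v)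
        rw [hij, hρx _ hne_u hne_v]
  -- periods
  have pA : (ρ ^ k0) v = v := by rw [claimA k0 hk0pos le_rfl, hk0v]
  have hσlk : (σ ^ (ℓ - k0)) v = u := by
    rw [← hk0v, ← Equiv.Perm.mul_apply, ← pow_add, Nat.sub_add_cancel (le_of_lt hk0lt), hσl]
    rfl
  have pB : (ρ ^ (ℓ - k0)) u = u := by
    rw [claimB (ℓ - k0) (by omega) le_rfl, hσlk]
  have pminA : ∀ r : ℕ, 0 < r → r < k0 → (ρ ^ r) v ≠ v := by
    intro r h1 h2 h
    rw [claimA r h1 (le_of_lt h2), ← hk0v] at h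
    have hdvd := inj r k0 u (le_of_lt h2) h
    have := Nat.le_of_dvd (by omega) hdvd
    omega
  have pminB : ∀ r : ℕ, 0 < r → r < ℓ - k0 → (ρ ^ r) u ≠ u := by
    intro r h1 h2 h
    rw [claimB r h1 (le_of_lt h2)] at h
    have h' : (σ ^ (r + k0)) u = u := by
      rw [pow_add, Equiv.Perm.mul_apply, hk0v, h]
    have hdvd := free (r + k0) u h'
    have := Nat.le_of_dvd (by omega) hdvd
    omega
  -- coverage: every point lies in the ρ-orbit of v or of u
  have cover : ∀ x : Fin ℓ, (∃ j : ℤ, (ρ ^ j) v = x) ∨ (∃ j : ℤ, (ρ ^ j) u = x) := by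
    intro x
    obtain ⟨n, hn⟩ := trans u x
    have hmod := pow_mod_orderOf σ n
    rw [hσord] at hmod
    have hr : (σ ^ (n % ℓ)) u = x := by rw [hmod]; exact hn
    have hrlt : n % ℓ < ℓ := Nat.mod_lt n hℓpos
    by_cases h0 : n % ℓ = 0
    · right
      refine ⟨0, ?_⟩
      rw [h0] at hr
      simpa using hr
    by_cases hle : n % ℓ ≤ k0
    · left
      refine ⟨((n % ℓ : ℕ) : ℤ), ?_⟩
      rw [zpow_natCast, claimA (n % ℓ) (by omega) hle]
      exact hr
    · right
      refine ⟨((n % ℓ - k0 : ℕ) : ℤ), ?_⟩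
      rw [zpow_natCast, claimB (n % ℓ - k0) (by omega) (by omega)]
      rw [← hk0v, ← Equiv.Perm.mul_apply, ← pow_add, Nat.sub_add_cancel (by omega)]
      exact hr
  -- b v is not in the ρ-orbit of v
  have bnotA : ∀ t : ℤ, b v ≠ (ρ ^ t) v := by
    intro t h
    rcases Int.even_or_odd t with ⟨s, hs⟩ | ⟨s, hs⟩
    · apply hbf ((ρ ^ s) v)
      have hcj := conjb s v
      rw [h] at hcj
      rw [hcj, ← Equiv.Perm.mul_apply, ← zpow_add, show -s + t = s by omega]
    · apply hcf ((ρ ^ s) v)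
      have h1 : c ((ρ ^ s) v) = b ((ρ ^ (s + 1)) v) := by
        rw [hcbρ, Equiv.Perm.mul_apply]
        congr 1
        rw [add_comm, zadd, zpow_one]
      rw [h1, conjb (s + 1) v, h, ← Equiv.Perm.mul_apply, ← zpow_add,
        show -(s + 1) + t = s by omega]
  -- hence b v lies in the ρ-orbit of u
  obtain ⟨t, ht⟩ : ∃ t : ℤ, (ρ ^ t) u = b v := by
    rcases cover (b v) with ⟨j, hj⟩ | h
    · exact absurd hj.symm (bnotA j)
    · exact h
  have hbbv : b (b v) = v := by rw [← Equiv.Perm.mul_apply, hb2]; rfl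
  have hbu : b u = (ρ ^ t) v := by
    have h1 := conjb t u
    rw [ht, hbbv] at h1
    have h2 : (ρ ^ t) ((ρ ^ (-t)) (b u)) = b u := by
      rw [← zadd, add_neg_cancel, zpow_zero]; rfl
    rw [h1, h2]
  have fA : ∀ j : ℤ, b ((ρ ^ j) v) = (ρ ^ (t - j)) u := by
    intro j
    rw [conjb j v, ← ht, ← zadd, show -j + t = t - j by omega]
  have fB : ∀ j : ℤ, b ((ρ ^ j) u) = (ρ ^ (t - j)) v := by
    intro j
    rw [conjb j u, hbu, ← zadd, show -j + t = t - j by omega]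
  -- the two orbits have equal size, so k0 = m
  have hk0m : k0 = m := by
    set Av : Finset (Fin ℓ) := (Finset.range k0).image (fun j => (ρ ^ j) v) with hAv
    set Au : Finset (Fin ℓ) := (Finset.range (ℓ - k0)).image (fun j => (ρ ^ j) u) with hAu
    have injOrb : ∀ (x : Fin ℓ) (p : ℕ), (∀ r : ℕ, 0 < r → r < p → (ρ ^ r) x ≠ x) →
        ∀ i ∈ Finset.range p, ∀ j ∈ Finset.range p,
          (ρ ^ i) x = (ρ ^ j) x → i = j := by
      intro x p hmin i hi j hj h
      simp only [Finset.mem_range] at hi hj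
      rcases le_total i j with hle | hle
      · by_contra hne
        exact hmin (j - i) (by omega) (by omega) (auxCancel ρ x hle h)
      · by_contra hne
        exact hmin (i - j) (by omega) (by omega) (auxCancel ρ x hle h.symm)
    have cardAv : Av.card = k0 := by
      rw [hAv, Finset.card_image_of_injOn, Finset.card_range]
      intro i hi j hj h
      exact injOrb v k0 pminA i hi j hj h
    have cardAu : Au.card = ℓ - k0 := by
      rw [hAu, Finset.card_image_of_injOn, Finset.card_range]
      intro i hi j hj h
      exact injOrb u (ℓ - k0) pminB i hi j hj h
    have mapAvAu : ∀ x ∈ Av, b x ∈ Au := by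
      intro x hx
      rw [hAv, Finset.mem_image] at hx
      obtain ⟨j, hj, rfl⟩ := hx
      rw [Finset.mem_range] at hj
      have h1 : ((ρ : Equiv.Perm (Fin ℓ)) ^ (j : ℕ)) v = (ρ ^ ((j : ℕ) : ℤ)) v := by
        rw [zpow_natCast]
      rw [h1, fA]
      obtain ⟨r, hr, hre⟩ := auxRed ρ (p := ℓ - k0) (by omega) u pB (t - j)
      rw [hre, hAu, Finset.mem_image]
      exact ⟨r, Finset.mem_range.mpr hr, rfl⟩
    have mapAuAv : ∀ x ∈ Au, b x ∈ Av := by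
      intro x hx
      rw [hAu, Finset.mem_image] at hx
      obtain ⟨j, hj, rfl⟩ := hx
      rw [Finset.mem_range] at hj
      have h1 : ((ρ : Equiv.Perm (Fin ℓ)) ^ (j : ℕ)) u = (ρ ^ ((j : ℕ) : ℤ)) u := by
        rw [zpow_natCast]
      rw [h1, fB]
      obtain ⟨r, hr, hre⟩ := auxRed ρ (p := k0) hk0pos v pA (t - j)
      rw [hre, hAv, Finset.mem_image]
      exact ⟨r, Finset.mem_range.mpr hr, rfl⟩
    have h1 : Av.card ≤ Au.card :=
      Finset.card_le_card_of_injOn (fun x => b x) mapAvAu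
        (fun x _ y _ h => b.injective h)
    have h2 : Au.card ≤ Av.card :=
      Finset.card_le_card_of_injOn (fun x => b x) mapAuAv
        (fun x _ y _ h => b.injective h)
    rw [cardAv, cardAu] at h1 h2
    omega
  -- the central involution z
  set z : Equiv.Perm (Fin ℓ) := σ ^ m with hz
  have hzu : z u = v := by rw [hz, ← hk0m]; exact hk0v
  have hz2 : z * z = 1 := by
    rw [hz, ← pow_add, show m + m = ℓ by omega, hσl]
  have hzz : ∀ x, z (z x) = x := by
    intro x
    rw [← Equiv.Perm.mul_apply, hz2]
    rfl
  have hzv : z v = u := by rw [← hzu, hzz]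
  have hzf : ∀ x, z x ≠ x := by
    intro x h
    have hdvd := free m x h
    have := Nat.le_of_dvd (by omega) hdvd
    omega
  have hzd : z * d = d * z := by
    ext x
    rw [Equiv.Perm.mul_apply, Equiv.Perm.mul_apply]
    by_cases hxu : x = u
    · rw [hxu, hdu, hzv, hzu, hdv]
    by_cases hxv : x = v
    · rw [hxv, hdv, hzu, hzv, hdu]
    rw [hdx x hxu hxv, hdx (z x) ?_ ?_]
    · intro h
      apply hxv
      rw [← hzz x, h, hzu]
    · intro h
      apply hxu
      rw [← hzz x, h, hzv]
  have hzσ : z * σ = σ * z := ((Commute.refl σ).pow_left m).eq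
  have hzρ : z * ρ = ρ * z := by
    rw [hρσd, ← mul_assoc, hzσ, mul_assoc, hzd, ← mul_assoc]
  have hzρj : ∀ (j : ℤ) (x : Fin ℓ), z ((ρ ^ j) x) = (ρ ^ j) (z x) := by
    intro j x
    have hzρ' : Commute z ρ := hzρ
    have hcz : Commute z (ρ ^ j) := hzρ'.zpow_right j
    rw [← Equiv.Perm.mul_apply, hcz.eq, Equiv.Perm.mul_apply]
  have hzb : z * b = b * z := by
    ext x
    rw [Equiv.Perm.mul_apply, Equiv.Perm.mul_apply]
    rcases cover x with ⟨j, rfl⟩ | ⟨j, rfl⟩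
    · rw [fA j, hzρj, hzu, hzρj, hzv, fB j]
    · rw [fB j, hzρj, hzv, hzρj, hzu, fA j]
  have hzc : z * c = c * z := by
    rw [hcbρ, ← mul_assoc, hzb, mul_assoc, hzρ, ← mul_assoc]
  -- assemble the partition
  refine ⟨Finset.univ.image (fun x => ({x, z x} : Finset (Fin ℓ))), ?_, ?_, ?_⟩
  · intro p hp
    rw [Finset.mem_image] at hp
    obtain ⟨x, _, rfl⟩ := hp
    exact Finset.card_pair (Ne.symm (hzf x))
  · intro a
    refine ⟨{a, z a}, ⟨Finset.mem_image_of_mem _ (Finset.mem_univ a), by simp⟩, ?_⟩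
    rintro q ⟨hq, haq⟩
    rw [Finset.mem_image] at hq
    obtain ⟨x, _, rfl⟩ := hq
    rw [Finset.mem_insert, Finset.mem_singleton] at haq
    rcases haq with rfl | h
    · rfl
    · rw [h, hzz]
      exact Finset.pair_comm x (z x)
  · intro g hg p hp
    have hgz : z * g = g * z := by
      have hle : Subgroup.closure ({b, c, d} : Set (Equiv.Perm (Fin ℓ))) ≤
          Subgroup.centralizer {z} := by
        rw [Subgroup.closure_le]
        rintro e he
        simp only [Set.mem_insert_iff, Set.mem_singleton_iff] at he
        rcases he with rfl | rfl | rfl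
        · exact Subgroup.mem_centralizer_singleton_iff.mpr hzb.symm
        · exact Subgroup.mem_centralizer_singleton_iff.mpr hzc.symm
        · exact Subgroup.mem_centralizer_singleton_iff.mpr hzd.symm
      exact (Subgroup.mem_centralizer_singleton_iff.mp (hle hg)).symm
    rw [Finset.mem_image] at hp
    obtain ⟨x, _, rfl⟩ := hp
    have himg : ({x, z x} : Finset (Fin ℓ)).image ⇑g = {g x, g (z x)} := by
      rw [Finset.image_insert, Finset.image_singleton]
    rw [himg]
    have hcomm : g (z x) = z (g x) := by
      rw [← Equiv.Perm.mul_apply, ← hgz, Equiv.Perm.mul_apply]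
    rw [hcomm]
    exact Finset.mem_image_of_mem _ (Finset.mem_univ (g x))
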